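/- With the setup of the Vorob'ev quantile Q_ρ = {x : p_Γ(x) ≥ ρ}: for any measurable M with μ(M) = μ(Q_ρ), the difference of expected symmetric-difference measures satisfies E[μ(M Δ Γ)] − E[μ(Q_ρ Δ Γ)] = 2(∫_{Q_ρ \ M} p_Γ dμ − ∫_{M \ Q_ρ} p_Γ dμ) ≥ 2ρ(μ(Q_ρ \ M) − μ(M \ Q_ρ)) = 0. -/

import Mathlib

open MeasureTheory Set
open scoped ENNReal symmDiff

section aux

variable {X : Type*} [MeasurableSpace X]
variable {Ω : Type*} [MeasurableSpace Ω]

lemma vorobev_gamma_meas (Γ : Ω → Set X)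
    (hΓ : MeasurableSet {q : Ω × X | q.2 ∈ Γ q.1}) (ω : Ω) :
    MeasurableSet (Γ ω) := by
  have h : Γ ω = Prod.mk ω ⁻¹' {q : Ω × X | q.2 ∈ Γ q.1} := rfl
  rw [h]
  exact hΓ.preimage measurable_prodMk_left

lemma vorobev_swap (P : Measure Ω) [IsProbabilityMeasure P] (Γ : Ω → Set X)
    (hΓ : MeasurableSet {q : Ω × X | q.2 ∈ Γ q.1})
    (p : X → ℝ≥0∞) (hp : ∀ x, p x = P {ω | x ∈ Γ ω})
    (ν : Measure X) [IsFiniteMeasure ν] :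
    ∫⁻ ω, ν (Γ ω) ∂P = ∫⁻ x, p x ∂ν := by
  have h1 : (fun ω => ν (Γ ω))
      = fun ω => ν (Prod.mk ω ⁻¹' {q : Ω × X | q.2 ∈ Γ q.1}) := rfl
  rw [h1, ← Measure.prod_apply hΓ, Measure.prod_apply_symm hΓ]
  refine lintegral_congr fun x => ?_
  rw [hp]
  rfl

end aux

lemma vorobev_exp {X : Type*} [MeasurableSpace X] (μ : Measure X) [IsFiniteMeasure μ]
    {Ω : Type*} [MeasurableSpace Ω] (P : Measure Ω) [IsProbabilityMeasure P]
    (Γ : Ω → Set X)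
    (hΓ : MeasurableSet {q : Ω × X | q.2 ∈ Γ q.1})
    (p : X → ℝ≥0∞) (hp : ∀ x, p x = P {ω | x ∈ Γ ω})
    (A : Set X) (hA : MeasurableSet A) :
    (∫⁻ ω, μ (A ∆ Γ ω) ∂P) + 2 * ∫⁻ x in A, p x ∂μ
      = μ A + ∫⁻ x, p x ∂μ := by
  have hΓω : ∀ ω, MeasurableSet (Γ ω) := vorobev_gamma_meas Γ hΓ
  -- measurability of ω ↦ μ (A \ Γ ω)
  have hm1 : Measurable fun ω => μ (A \ Γ ω) := by
    have h : (fun ω => μ (A \ Γ ω))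
        = fun ω => μ.restrict A (Prod.mk ω ⁻¹' {q : Ω × X | q.2 ∈ Γ q.1}ᶜ) := by
      funext ω
      rw [Measure.restrict_apply' hA]
      congr 1
      ext x
      simp [Set.mem_diff, and_comm]
    rw [h]
    exact measurable_measure_prodMk_left hΓ.compl
  have hm2 : Measurable fun ω => μ (A ∩ Γ ω) := by
    have h : (fun ω => μ (A ∩ Γ ω))
        = fun ω => μ.restrict A (Prod.mk ω ⁻¹' {q : Ω × X | q.2 ∈ Γ q.1}) := by
      funext ω
      rw [Measure.restrict_apply' hA]
      congr 1
      ext x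
      simp [and_comm]
    rw [h]
    exact measurable_measure_prodMk_left hΓ
  -- split the symmetric difference
  have hsplit : ∀ ω, μ (A ∆ Γ ω) = μ (A \ Γ ω) + μ (Γ ω \ A) := by
    intro ω
    rw [Set.symmDiff_def]
    exact measure_union disjoint_sdiff_sdiff ((hΓω ω).diff hA)
  have hE : (∫⁻ ω, μ (A ∆ Γ ω) ∂P)
      = (∫⁻ ω, μ (A \ Γ ω) ∂P) + ∫⁻ ω, μ (Γ ω \ A) ∂P := by
    simp_rw [hsplit]
    exact lintegral_add_left hm1 _
  -- the second part via Tonelli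
  have h2 : (∫⁻ ω, μ (Γ ω \ A) ∂P) = ∫⁻ x in Aᶜ, p x ∂μ := by
    have h : (fun ω => μ (Γ ω \ A)) = fun ω => μ.restrict Aᶜ (Γ ω) := by
      funext ω
      rw [Measure.restrict_apply (hΓω ω), Set.diff_eq]
    rw [h]
    exact vorobev_swap P Γ hΓ p hp (μ.restrict Aᶜ)
  -- the intersection part via Tonelli
  have h3 : (∫⁻ ω, μ (A ∩ Γ ω) ∂P) = ∫⁻ x in A, p x ∂μ := by
    have h : (fun ω => μ (A ∩ Γ ω)) = fun ω => μ.restrict A (Γ ω) := by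
      funext ω
      rw [Measure.restrict_apply (hΓω ω), Set.inter_comm]
    rw [h]
    exact vorobev_swap P Γ hΓ p hp (μ.restrict A)
  -- first part: ∫ μ(A \ Γω) + ∫_A p = μ A
  have h1 : (∫⁻ ω, μ (A \ Γ ω) ∂P) + ∫⁻ x in A, p x ∂μ = μ A := by
    rw [← h3, ← lintegral_add_left hm1]
    have : ∀ ω, μ (A \ Γ ω) + μ (A ∩ Γ ω) = μ A := fun ω =>
      measure_diff_add_inter A (hΓω ω)
    simp_rw [this]
    simp
  rw [hE, h2, two_mul]
  calc (∫⁻ ω, μ (A \ Γ ω) ∂P) + (∫⁻ x in Aᶜ, p x ∂μ)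
        + ((∫⁻ x in A, p x ∂μ) + ∫⁻ x in A, p x ∂μ)
      = ((∫⁻ ω, μ (A \ Γ ω) ∂P) + ∫⁻ x in A, p x ∂μ)
        + ((∫⁻ x in A, p x ∂μ) + ∫⁻ x in Aᶜ, p x ∂μ) := by ring
    _ = μ A + ∫⁻ x, p x ∂μ := by rw [h1, lintegral_add_compl p hA]

/-- Quantitative version: the difference of expected symmetric-difference measures equals
`2(∫_{Q\M} p dμ − ∫_{M\Q} p dμ)`, which is bounded below by `2ρ(μ(Q\M) − μ(M\Q)) = 0`. -/
theorem vorobev_quantile_difference_identity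
    {X : Type*} [MeasurableSpace X] (μ : Measure X) [IsFiniteMeasure μ]
    {Ω : Type*} [MeasurableSpace Ω] (P : Measure Ω) [IsProbabilityMeasure P]
    (Γ : Ω → Set X)
    (hΓ : MeasurableSet {p : Ω × X | p.2 ∈ Γ p.1})
    (p : X → ℝ≥0∞) (hp : ∀ x, p x = P {ω | x ∈ Γ ω})
    (ρ : ℝ≥0∞) (hρ : ρ ≤ 1)
    (Q : Set X) (hQ : Q = {x | ρ ≤ p x})
    (M : Set X) (hM : MeasurableSet M) (hμM : μ M = μ Q) :
    (∫⁻ ω, μ (M ∆ Γ ω) ∂P).toReal - (∫⁻ ω, μ (Q ∆ Γ ω) ∂P).toReal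
      = 2 * ((∫⁻ x in Q \ M, p x ∂μ).toReal - (∫⁻ x in M \ Q, p x ∂μ).toReal) ∧
    2 * ((∫⁻ x in Q \ M, p x ∂μ).toReal - (∫⁻ x in M \ Q, p x ∂μ).toReal)
      ≥ 2 * ρ.toReal * ((μ (Q \ M)).toReal - (μ (M \ Q)).toReal) ∧
    2 * ρ.toReal * ((μ (Q \ M)).toReal - (μ (M \ Q)).toReal) = 0 := by
  -- basic measurability and boundedness facts
  have hpm : Measurable p := by
    have h : p = fun x => P ((fun ω => (ω, x)) ⁻¹' {q : Ω × X | q.2 ∈ Γ q.1}) := by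
      funext x; rw [hp]; rfl
    rw [h]
    exact measurable_measure_prodMk_right hΓ
  have hQm : MeasurableSet Q := by
    rw [hQ]; exact measurableSet_le measurable_const hpm
  have hp1 : ∀ x, p x ≤ 1 := fun x => by rw [hp]; exact prob_le_one
  set T := ∫⁻ x, p x ∂μ with hT
  have hTfin : T ≠ ⊤ := by
    refine (lt_of_le_of_lt (lintegral_mono hp1) ?_).ne
    rw [lintegral_one]
    exact measure_lt_top μ univ
  have hsle : ∀ s : Set X, (∫⁻ x in s, p x ∂μ) ≠ ⊤ := fun s =>
    (lt_of_le_of_lt (setLIntegral_le_lintegral s p) hTfin.lt_top).ne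
  -- notation
  set EM := ∫⁻ ω, μ (M ∆ Γ ω) ∂P with hEM
  set EQ := ∫⁻ ω, μ (Q ∆ Γ ω) ∂P with hEQ
  set a := ∫⁻ x in Q \ M, p x ∂μ with ha
  set b := ∫⁻ x in M \ Q, p x ∂μ with hb
  set c := ∫⁻ x in M ∩ Q, p x ∂μ with hc
  set IM := ∫⁻ x in M, p x ∂μ with hIM
  set IQ := ∫⁻ x in Q, p x ∂μ with hIQ
  have e1 : EM + 2 * IM = μ M + T := vorobev_exp μ P Γ hΓ p hp M hM
  have e2 : EQ + 2 * IQ = μ Q + T := vorobev_exp μ P Γ hΓ p hp Q hQm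
  have e3 : IM = c + b := by
    rw [hIM, hc, hb, ← lintegral_union (hM.diff hQm)
      (disjoint_sdiff_self_right.mono_left inter_subset_right), inter_union_diff]
  have e4 : IQ = c + a := by
    rw [hIQ, hc, ha, Set.inter_comm, ← lintegral_union (hQm.diff hM)
      (disjoint_sdiff_self_right.mono_left inter_subset_right), inter_union_diff]
  -- finiteness
  have hEMfin : EM ≠ ⊤ := by
    intro h
    rw [h, top_add] at e1
    exact (ENNReal.add_ne_top.mpr ⟨(measure_lt_top μ M).ne, hTfin⟩) e1.symm
  have hEQfin : EQ ≠ ⊤ := by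
    intro h
    rw [h, top_add] at e2
    exact (ENNReal.add_ne_top.mpr ⟨(measure_lt_top μ Q).ne, hTfin⟩) e2.symm
  -- real versions
  have r1 : EM.toReal + 2 * IM.toReal = (μ M).toReal + T.toReal := by
    have := congrArg ENNReal.toReal e1
    rwa [ENNReal.toReal_add hEMfin (ENNReal.mul_ne_top ENNReal.ofNat_ne_top (hsle M)),
      ENNReal.toReal_mul, ENNReal.toReal_add (measure_lt_top μ M).ne hTfin,
      ENNReal.toReal_ofNat] at this
  have r2 : EQ.toReal + 2 * IQ.toReal = (μ Q).toReal + T.toReal := by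
    have := congrArg ENNReal.toReal e2
    rwa [ENNReal.toReal_add hEQfin (ENNReal.mul_ne_top ENNReal.ofNat_ne_top (hsle Q)),
      ENNReal.toReal_mul, ENNReal.toReal_add (measure_lt_top μ Q).ne hTfin,
      ENNReal.toReal_ofNat] at this
  have r3 : IM.toReal = c.toReal + b.toReal := by
    rw [e3, ENNReal.toReal_add (hsle _) (hsle _)]
  have r4 : IQ.toReal = c.toReal + a.toReal := by
    rw [e4, ENNReal.toReal_add (hsle _) (hsle _)]
  have rM : (μ M).toReal = (μ Q).toReal := by rw [hμM]
  -- μ (Q \ M) and μ (M \ Q) agree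
  have m1 : μ (M \ Q) + μ (M ∩ Q) = μ M := measure_diff_add_inter M hQm
  have m2 : μ (Q \ M) + μ (Q ∩ M) = μ Q := measure_diff_add_inter Q hM
  have hQM : (μ (Q \ M)).toReal = (μ (M \ Q)).toReal := by
    have t1 := congrArg ENNReal.toReal m1
    have t2 := congrArg ENNReal.toReal m2
    rw [ENNReal.toReal_add (measure_ne_top μ _) (measure_ne_top μ _)] at t1 t2
    rw [Set.inter_comm Q M] at t2
    linarith [rM]
  refine ⟨by linarith, ?_, by rw [hQM]; ring⟩
  -- the inequality
  have hage : ρ.toReal * (μ (Q \ M)).toReal ≤ a.toReal := by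
    have h : ρ * μ (Q \ M) ≤ a := by
      rw [← setLIntegral_const (Q \ M) ρ] at *
      refine setLIntegral_mono hpm fun x hx => ?_
      have := hx.1
      rw [hQ] at this
      exact this
    have := ENNReal.toReal_mono (hsle _) h
    rwa [ENNReal.toReal_mul] at this
  have hble : b.toReal ≤ ρ.toReal * (μ (M \ Q)).toReal := by
    have h : b ≤ ρ * μ (M \ Q) := by
      rw [← setLIntegral_const (M \ Q) ρ]
      refine setLIntegral_mono measurable_const fun x hx => ?_
      have := hx.2
      rw [hQ] at this
      exact le_of_not_ge this
    have hfin : ρ * μ (M \ Q) ≠ ⊤ :=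
      ENNReal.mul_ne_top (hρ.trans_lt ENNReal.one_lt_top).ne (measure_ne_top μ _)
    have := ENNReal.toReal_mono hfin h
    rwa [ENNReal.toReal_mul] at this
  rw [hQM] at hage ⊢
  linarith
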